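/- Let Z and Y be random vectors in ℝ^d with d̃_{W_r}(Z,Y) < 1 for some r ≥ 2. Then d̃_{W_{r−1}}(Z,Y) ≤ C̃_r · sqrt(d̃_{W_r}(Z,Y)) for some constant C̃_r > 0 depending only on r and d. Consequently, by induction, if d̃_{W_2}(Z,Y) < 1 then d̃_{W_1}(Z,Y) ≤ C̄_r · (d̃_{W_r}(Z,Y))^{1/2^{r−1}}. -/

import Mathlib

open MeasureTheory

set_option maxHeartbeats 1600000
set_option synthInstance.maxHeartbeats 1000000

/-- The modified smooth Wasserstein distance `d̃_{W_r}`: the supremum over `r`-times continuously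
differentiable test functions `h` with all partial derivatives of order `0 ≤ |α| ≤ r` bounded
by one, of `|E h(Z) - E h(Y)|`. -/
noncomputable def dtW (d r : ℕ) (μZ μY : Measure (EuclideanSpace ℝ (Fin d))) : ℝ :=
  sSup {c : ℝ | ∃ h : EuclideanSpace ℝ (Fin d) → ℝ,
    ContDiff ℝ r h ∧
    (∀ ℓ : ℕ, ℓ ≤ r → ∀ x, ∀ m : Fin ℓ → Fin d,
      |iteratedFDeriv ℝ ℓ h x (fun i => EuclideanSpace.single (m i) 1)| ≤ 1) ∧
    c = |∫ x, h x ∂μZ - ∫ y, h y ∂μY|}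

namespace DtWAux

open Metric Set Function

noncomputable abbrev Ed (d : ℕ) := EuclideanSpace ℝ (Fin d)

noncomputable instance instCENormCLMCMM (d ℓ : ℕ) :
    ContinuousENorm (Ed d →L[ℝ] ContinuousMultilinearMap ℝ (fun _ : Fin ℓ => Ed d) ℝ) := by
  exact @SeminormedAddGroup.toContinuousENorm
    (Ed d →L[ℝ] ContinuousMultilinearMap ℝ (fun _ : Fin ℓ => Ed d) ℝ) _

noncomputable instance instPMCLMCMM (d ℓ : ℕ) :
    TopologicalSpace.PseudoMetrizableSpace
      (Ed d →L[ℝ] ContinuousMultilinearMap ℝ (fun _ : Fin ℓ => Ed d) ℝ) := by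
  exact @PseudoEMetricSpace.pseudoMetrizableSpace
    (Ed d →L[ℝ] ContinuousMultilinearMap ℝ (fun _ : Fin ℓ => Ed d) ℝ) _

/-- The test-function class defining `dtW`. -/
def TC (d r : ℕ) (h : Ed d → ℝ) : Prop :=
  ContDiff ℝ r h ∧
  (∀ ℓ : ℕ, ℓ ≤ r → ∀ x, ∀ m : Fin ℓ → Fin d,
      |iteratedFDeriv ℝ ℓ h x (fun i => EuclideanSpace.single (m i) 1)| ≤ 1)

def dtWSet (d r : ℕ) (μZ μY : Measure (Ed d)) : Set ℝ :=
  {c : ℝ | ∃ h : Ed d → ℝ, ContDiff ℝ r h ∧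
    (∀ ℓ : ℕ, ℓ ≤ r → ∀ x, ∀ m : Fin ℓ → Fin d,
      |iteratedFDeriv ℝ ℓ h x (fun i => EuclideanSpace.single (m i) 1)| ≤ 1) ∧
    c = |∫ x, h x ∂μZ - ∫ y, h y ∂μY|}

lemma dtW_eq (d r : ℕ) (μZ μY : Measure (Ed d)) : dtW d r μZ μY = sSup (dtWSet d r μZ μY) := rfl

variable {d r : ℕ} {μZ μY : Measure (Ed d)}

lemma TC.abs_le_one {h : Ed d → ℝ} (hh : TC d r h) (x : Ed d) : |h x| ≤ 1 := by
  have := hh.2 0 (Nat.zero_le r) x (Fin.elim0)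
  simpa [iteratedFDeriv_zero_apply] using this

lemma TC.integrable {h : Ed d → ℝ} (hh : TC d r h) (μ : Measure (Ed d))
    [IsProbabilityMeasure μ] : Integrable h μ := by
  refine Integrable.mono' (integrable_const 1) ?_ ?_
  · exact (hh.1.continuous).aestronglyMeasurable
  · exact Filter.Eventually.of_forall fun x => by simpa using hh.abs_le_one x

lemma TC.abs_integral_le {h : Ed d → ℝ} (hh : TC d r h) (μ : Measure (Ed d))
    [IsProbabilityMeasure μ] : |∫ x, h x ∂μ| ≤ 1 := by
  have : ‖∫ x, h x ∂μ‖ ≤ ∫ _x, (1 : ℝ) ∂μ :=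
    norm_integral_le_of_norm_le (integrable_const 1)
      (Filter.Eventually.of_forall fun x => by simpa using hh.abs_le_one x)
  simpa using this

lemma zero_mem_dtWSet : (0 : ℝ) ∈ dtWSet d r μZ μY := by
  refine ⟨fun _ => 0, contDiff_const, ?_, by simp⟩
  intro ℓ _ x m
  simp [iteratedFDeriv_zero_fun]

lemma dtWSet_bddAbove [IsProbabilityMeasure μZ] [IsProbabilityMeasure μY] :
    BddAbove (dtWSet d r μZ μY) := by
  refine ⟨2, fun c hc => ?_⟩
  obtain ⟨h, h1, h2, rfl⟩ := hc
  have hh : TC d r h := ⟨h1, h2⟩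
  calc |∫ x, h x ∂μZ - ∫ y, h y ∂μY| ≤ |∫ x, h x ∂μZ| + |∫ y, h y ∂μY| := abs_sub _ _
    _ ≤ 1 + 1 := add_le_add (hh.abs_integral_le μZ) (hh.abs_integral_le μY)
    _ = 2 := by norm_num

lemma dtW_nonneg [IsProbabilityMeasure μZ] [IsProbabilityMeasure μY] :
    0 ≤ dtW d r μZ μY :=
  le_csSup dtWSet_bddAbove zero_mem_dtWSet

lemma le_dtW [IsProbabilityMeasure μZ] [IsProbabilityMeasure μY] {h : Ed d → ℝ}
    (hh : TC d r h) : |∫ x, h x ∂μZ - ∫ y, h y ∂μY| ≤ dtW d r μZ μY :=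
  le_csSup dtWSet_bddAbove ⟨h, hh.1, hh.2, rfl⟩

lemma dtW_le {a : ℝ} (ha : 0 ≤ a)
    (H : ∀ h : Ed d → ℝ, TC d r h → |∫ x, h x ∂μZ - ∫ y, h y ∂μY| ≤ a) :
    dtW d r μZ μY ≤ a := by
  rw [dtW_eq]
  refine Real.sSup_le ?_ ha
  rintro c ⟨h, h1, h2, rfl⟩
  exact H h ⟨h1, h2⟩

lemma dtW_anti {m n : ℕ} (hmn : m ≤ n) [IsProbabilityMeasure μZ] [IsProbabilityMeasure μY] :
    dtW d n μZ μY ≤ dtW d m μZ μY := by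
  rw [dtW_eq, dtW_eq]
  refine csSup_le_csSup dtWSet_bddAbove ⟨0, zero_mem_dtWSet⟩ ?_
  rintro c ⟨h, h1, h2, rfl⟩
  refine ⟨h, h1.of_le (by exact_mod_cast hmn), fun ℓ hℓ => h2 ℓ (hℓ.trans hmn), rfl⟩

variable {d : ℕ}

noncomputable abbrev bump (d : ℕ) : ContDiffBump (0 : Ed d) := ⟨1, 2, one_pos, one_lt_two⟩
noncomputable abbrev rho (d : ℕ) : Ed d → ℝ := (bump d).normed volume
lemma rho_continuous : Continuous (rho d) := ((bump d).contDiff_normed (n := 1)).continuous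
lemma rho_contDiff {n : ℕ∞} : ContDiff ℝ n (rho d) := (bump d).contDiff_normed
lemma rho_integral : ∫ x, rho d x = 1 := (bump d).integral_normed
lemma rho_cs : HasCompactSupport (rho d) := (bump d).hasCompactSupport_normed
lemma rho_ts : tsupport (rho d) = Metric.closedBall 0 2 := (bump d).tsupport_normed_eq (μ := volume)
lemma rho_nn (x : Ed d) : 0 ≤ rho d x := (bump d).nonneg_normed x
lemma rho_integrable : Integrable (rho d) := rho_continuous.integrable_of_hasCompactSupport rho_cs
lemma rho_supp_norm {y : Ed d} (hy : rho d y ≠ 0) : ‖y‖ ≤ 2 := by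
  have : y ∈ tsupport (rho d) := subset_closure (by simpa [Function.mem_support] using hy)
  rw [rho_ts] at this
  simpa [Metric.mem_closedBall, dist_zero_right] using this
lemma rho_eq_zero {z : Ed d} (hz : 2 < ‖z‖) : rho d z = 0 := by
  apply image_eq_zero_of_notMem_tsupport
  rw [rho_ts]
  simpa [Metric.mem_closedBall, dist_zero_right] using not_le.2 hz
lemma fderiv_rho_continuous : Continuous (fderiv ℝ (rho d)) :=
  (rho_contDiff (n := ⊤)).continuous_fderiv (by simp)
lemma fderiv_rho_cs : HasCompactSupport (fderiv ℝ (rho d)) := rho_cs.fderiv ℝ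
lemma fderiv_rho_eq_zero {z : Ed d} (hz : 2 < ‖z‖) : fderiv ℝ (rho d) z = 0 := by
  apply fderiv_of_notMem_tsupport
  rw [rho_ts]
  simpa [Metric.mem_closedBall, dist_zero_right] using not_le.2 hz
lemma fderiv_rho_bound : ∃ M : ℝ, 0 ≤ M ∧ ∀ z, ‖fderiv ℝ (rho d) z‖ ≤ M := by
  obtain ⟨M, hM⟩ := (fderiv_rho_cs (d := d)).exists_bound_of_continuous fderiv_rho_continuous
  exact ⟨max M 0, le_max_right _ _, fun z => (hM z).trans (le_max_left _ _)⟩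
noncomputable def Cd (d : ℕ) : ℝ := ∫ w, ‖fderiv ℝ (rho d) w‖
lemma Cd_nonneg : 0 ≤ Cd d := integral_nonneg fun w => norm_nonneg _
lemma norm_fderiv_rho_integrable : Integrable (fun w => ‖fderiv ℝ (rho d) w‖) :=
  (fderiv_rho_continuous.norm).integrable_of_hasCompactSupport (fderiv_rho_cs.norm)

lemma coord_le_norm (x : Ed d) (j : Fin d) : |x j| ≤ ‖x‖ := by
  have h := abs_real_inner_le_norm (EuclideanSpace.single j (1:ℝ)) x
  rw [EuclideanSpace.inner_single_left] at h
  simpa [EuclideanSpace.norm_single] using h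

lemma euclid_decomp (x : Ed d) : x = ∑ j : Fin d, x j • EuclideanSpace.single j (1:ℝ) := by
  ext k
  rw [WithLp.ofLp_sum, Finset.sum_apply]
  simp [EuclideanSpace.single_apply]

lemma ml_bound {n : ℕ} (T : ContinuousMultilinearMap ℝ (fun _ : Fin n => Ed d) ℝ)
    (hT : ∀ m : Fin n → Fin d, |T (fun i => EuclideanSpace.single (m i) 1)| ≤ 1) :
    ‖T‖ ≤ (d : ℝ) ^ n := by
  apply T.opNorm_le_bound (by positivity)
  intro v
  have h0 := T.toMultilinearMap.map_sum (α := fun _ : Fin n => Fin d)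
      (g := fun i j => v i j • EuclideanSpace.single j (1:ℝ))
  have hv : T v = ∑ m : Fin n → Fin d, T (fun i => v i (m i) • EuclideanSpace.single (m i) (1:ℝ)) := by
    have hvv : v = fun i => ∑ j : Fin d, v i j • EuclideanSpace.single j (1:ℝ) := by
      funext i; exact euclid_decomp (v i)
    conv_lhs => rw [hvv]
    exact h0
  rw [hv]
  calc ‖∑ m : Fin n → Fin d, T (fun i => v i (m i) • EuclideanSpace.single (m i) (1:ℝ))‖
      ≤ ∑ m : Fin n → Fin d, ‖T (fun i => v i (m i) • EuclideanSpace.single (m i) (1:ℝ))‖ :=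
        norm_sum_le _ _
    _ ≤ ∑ _m : Fin n → Fin d, ∏ i, ‖v i‖ := by
        apply Finset.sum_le_sum
        intro m _
        have heq : T (fun i => v i (m i) • EuclideanSpace.single (m i) (1:ℝ))
            = (∏ i, v i (m i)) • T (fun i => EuclideanSpace.single (m i) (1:ℝ)) :=
          T.toMultilinearMap.map_smul_univ (fun i => v i (m i)) _
        rw [heq, norm_smul]
        calc ‖∏ i, v i (m i)‖ * ‖T fun i => EuclideanSpace.single (m i) (1:ℝ)‖
            ≤ ‖∏ i, v i (m i)‖ * 1 := by
              apply mul_le_mul_of_nonneg_left _ (norm_nonneg _)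
              simpa [Real.norm_eq_abs] using hT m
          _ ≤ ∏ i, ‖v i‖ := by
              rw [mul_one, Real.norm_eq_abs, Finset.abs_prod]
              apply Finset.prod_le_prod (fun i _ => abs_nonneg _)
              intro i _; exact coord_le_norm (v i) (m i)
    _ = (d:ℝ) ^ n * ∏ i, ‖v i‖ := by
        rw [Finset.sum_const, Finset.card_univ, Fintype.card_fun]
        simp [nsmul_eq_mul]

section M
variable {M : Type*} [NormedAddCommGroup M] [NormedSpace ℝ M]

lemma smul_integrable_aux {G : Ed d → M} (hG : Continuous G) (x : Ed d) (ε : ℝ) :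
    Integrable (fun y => rho d y • G (x - ε • y)) := by
  apply Continuous.integrable_of_hasCompactSupport
  · exact rho_continuous.smul (hG.comp (continuous_const.sub (continuous_id.const_smul ε)))
  · exact rho_cs.smul_right

lemma cov {ε : ℝ} (hε : 0 < ε) (F : Ed d → M) (x : Ed d) :
    ∫ y, rho d y • F (x - ε • y)
      = ∫ u, ((ε ^ d)⁻¹ * rho d (ε⁻¹ • (x - u))) • F u := by
  set q : Ed d → M := fun w => ((ε ^ d)⁻¹ * rho d (ε⁻¹ • w)) • F (x - w) with hq
  have e1 : ∫ u, ((ε ^ d)⁻¹ * rho d (ε⁻¹ • (x - u))) • F u = ∫ u, q (x - u) := by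
    congr 1; funext u; simp [hq, sub_sub_cancel]
  have e2 : ∫ u, q (x - u) = ∫ w, q w := integral_sub_left_eq_self q volume x
  have e3 : ∫ y, q (ε • y) = |(ε ^ (Module.finrank ℝ (Ed d)))⁻¹| • ∫ w, q w :=
    MeasureTheory.Measure.integral_comp_smul volume q ε
  rw [finrank_euclideanSpace_fin] at e3
  have e4 : ∀ y : Ed d, q (ε • y) = (ε ^ d)⁻¹ • (rho d y • F (x - ε • y)) := by
    intro y
    simp [hq, smul_smul, inv_smul_smul₀ hε.ne']
  rw [e1, e2]
  calc ∫ y, rho d y • F (x - ε • y)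
      = (ε ^ d) • ∫ y, (ε ^ d)⁻¹ • (rho d y • F (x - ε • y)) := by
        rw [integral_smul, smul_smul, mul_inv_cancel₀ (by positivity), one_smul]
    _ = (ε ^ d) • ∫ y, q (ε • y) := by
        congr 1; exact integral_congr_ae (Filter.Eventually.of_forall fun y => (e4 y).symm)
    _ = ∫ w, q w := by
        rw [e3, abs_of_nonneg (by positivity), smul_smul, mul_inv_cancel₀ (by positivity),
          one_smul]
end M

lemma moll_rep {k : ℕ} {h : Ed d → ℝ} (hk : ContDiff ℝ (k : ℕ) h)
    (hB : ∀ ℓ : ℕ, ℓ ≤ k → ∀ x, ‖iteratedFDeriv ℝ ℓ h x‖ ≤ (d : ℝ) ^ ℓ)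
    (ε : ℝ) :
    ∀ ℓ : ℕ, ℓ ≤ k →
      iteratedFDeriv ℝ ℓ (fun x => ∫ y, rho d y • h (x - ε • y))
        = fun x => ∫ y, rho d y • iteratedFDeriv ℝ ℓ h (x - ε • y) := by
  have hcont : ∀ ℓ : ℕ, ℓ ≤ k → Continuous (iteratedFDeriv ℝ ℓ h) := by
    intro ℓ hℓ
    refine (hk.iteratedFDeriv_right (m := 0) (i := ℓ) ?_).continuous
    simp only [zero_add]
    exact_mod_cast hℓ
  have hdiff : ∀ ℓ : ℕ, ℓ < k → Differentiable ℝ (iteratedFDeriv ℝ ℓ h) := by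
    intro ℓ hℓ
    have : ContDiff ℝ 1 (iteratedFDeriv ℝ ℓ h) := by
      apply hk.iteratedFDeriv_right (m := 1) (i := ℓ)
      have h1 : (1 : ℕ) + ℓ ≤ k := by omega
      exact_mod_cast h1
    exact this.differentiable one_ne_zero
  have hfderiv_cont : ∀ ℓ : ℕ, ℓ + 1 ≤ k → Continuous (fderiv ℝ (iteratedFDeriv ℝ ℓ h)) := by
    intro ℓ hℓ
    rw [fderiv_iteratedFDeriv]
    exact (LinearIsometryEquiv.continuous _).comp (hcont (ℓ + 1) hℓ)
  intro ℓ
  induction ℓ with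
  | zero =>
    intro _
    funext x
    ext m
    rw [iteratedFDeriv_zero_apply]
    rw [ContinuousMultilinearMap.integral_apply (smul_integrable_aux (hcont 0 (Nat.zero_le _)) x ε)]
    simp only [ContinuousMultilinearMap.smul_apply, iteratedFDeriv_zero_apply]
  | succ ℓ IH =>
    intro hS
    have hℓk : ℓ ≤ k := by omega
    have hℓltk : ℓ < k := by omega
    funext x
    ext m
    rw [iteratedFDeriv_succ_apply_left, IH hℓk]
    have hGderiv : HasFDerivAt (fun x => ∫ y, rho d y • iteratedFDeriv ℝ ℓ h (x - ε • y))
        (∫ y, rho d y • fderiv ℝ (iteratedFDeriv ℝ ℓ h) (x - ε • y)) x := by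
      apply hasFDerivAt_integral_of_dominated_of_fderiv_le
        (F' := fun x y => rho d y • fderiv ℝ (iteratedFDeriv ℝ ℓ h) (x - ε • y))
        (bound := fun y => rho d y * (d : ℝ) ^ (ℓ + 1)) (s := Metric.ball x 1) (Metric.ball_mem_nhds x one_pos)
      · exact Filter.Eventually.of_forall fun x' =>
          (rho_continuous.smul ((hcont ℓ hℓk).comp (continuous_const.sub (continuous_id.const_smul ε)))).aestronglyMeasurable
      · exact smul_integrable_aux (hcont ℓ hℓk) x ε
      · exact (rho_continuous.smul ((hfderiv_cont ℓ hS).comp (continuous_const.sub (continuous_id.const_smul ε)))).aestronglyMeasurable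
      · refine Filter.Eventually.of_forall fun y => fun x' _ => ?_
        refine le_trans (ContinuousLinearMap.opNorm_smul_le _ _) ?_
        rw [Real.norm_eq_abs, abs_of_nonneg (rho_nn y), norm_fderiv_iteratedFDeriv]
        exact mul_le_mul_of_nonneg_left (hB (ℓ + 1) hS _) (rho_nn y)
      · exact rho_integrable.mul_const _
      · refine Filter.Eventually.of_forall fun y => fun x' _ => ?_
        have h1 : HasFDerivAt (fun x' : Ed d => x' - ε • y)
            (ContinuousLinearMap.id ℝ (Ed d)) x' := (hasFDerivAt_id x').sub_const _
        have h2 : HasFDerivAt (iteratedFDeriv ℝ ℓ h)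
            (fderiv ℝ (iteratedFDeriv ℝ ℓ h) (x' - ε • y)) (x' - ε • y) :=
          (hdiff ℓ hℓltk _).hasFDerivAt
        have h3 := h2.comp x' h1
        rw [ContinuousLinearMap.comp_id] at h3
        exact h3.const_smul (rho d y)
    rw [hGderiv.fderiv]
    have hint1 := smul_integrable_aux
      (M := Ed d →L[ℝ] ContinuousMultilinearMap ℝ (fun _ : Fin ℓ => Ed d) ℝ) (hfderiv_cont ℓ hS) x ε
    rw [ContinuousLinearMap.integral_apply hint1]
    have hint2 : Integrable
        (fun y => (rho d y • fderiv ℝ (iteratedFDeriv ℝ ℓ h) (x - ε • y)) (m 0)) := by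
      refine Integrable.mono' (g := fun y => ‖rho d y • fderiv ℝ (iteratedFDeriv ℝ ℓ h) (x - ε • y)‖ * ‖m 0‖) ?_ ?_ ?_
      · exact hint1.norm.mul_const ‖m 0‖
      · exact ((rho_continuous.smul ((hfderiv_cont ℓ hS).comp (continuous_const.sub (continuous_id.const_smul ε)))).clm_apply
          continuous_const).aestronglyMeasurable
      · exact Filter.Eventually.of_forall fun y => ContinuousLinearMap.le_opNorm _ _
    rw [ContinuousMultilinearMap.integral_apply hint2]
    rw [ContinuousMultilinearMap.integral_apply (smul_integrable_aux (hcont (ℓ+1) hS) x ε)]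
    congr 1

section Main
variable {k : ℕ} {h : Ed d → ℝ} {ε : ℝ}

/-- directional bounds transfer to the mollification, orders `≤ k`. -/
lemma moll_dirbound (hk : ContDiff ℝ (k : ℕ) h)
    (hb : ∀ ℓ : ℕ, ℓ ≤ k → ∀ x, ∀ m : Fin ℓ → Fin d,
      |iteratedFDeriv ℝ ℓ h x (fun i => EuclideanSpace.single (m i) 1)| ≤ 1)
    (ε : ℝ) {ℓ : ℕ} (hℓ : ℓ ≤ k) (x : Ed d) (m : Fin ℓ → Fin d) :
    |iteratedFDeriv ℝ ℓ (fun x => ∫ y, rho d y • h (x - ε • y)) x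
      (fun i => EuclideanSpace.single (m i) 1)| ≤ 1 := by
  have hB : ∀ ℓ : ℕ, ℓ ≤ k → ∀ x, ‖iteratedFDeriv ℝ ℓ h x‖ ≤ (d : ℝ) ^ ℓ :=
    fun ℓ hℓ x => ml_bound _ (hb ℓ hℓ x)
  have hcont : Continuous (iteratedFDeriv ℝ ℓ h) := by
    refine (hk.iteratedFDeriv_right (m := 0) (i := ℓ) ?_).continuous
    simp only [zero_add]
    exact_mod_cast hℓ
  rw [moll_rep hk hB ε ℓ hℓ]
  rw [ContinuousMultilinearMap.integral_apply (smul_integrable_aux hcont x ε)]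
  have hptwise : ∀ y : Ed d,
      ‖(rho d y • iteratedFDeriv ℝ ℓ h (x - ε • y)) (fun i => EuclideanSpace.single (m i) 1)‖
        ≤ rho d y := by
    intro y
    rw [ContinuousMultilinearMap.smul_apply, norm_smul, Real.norm_eq_abs,
      abs_of_nonneg (rho_nn y)]
    calc rho d y * ‖iteratedFDeriv ℝ ℓ h (x - ε • y) (fun i => EuclideanSpace.single (m i) 1)‖
        ≤ rho d y * 1 := by
          apply mul_le_mul_of_nonneg_left _ (rho_nn y)
          simpa [Real.norm_eq_abs] using hb ℓ hℓ (x - ε • y) m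
      _ = rho d y := mul_one _
  calc |∫ y, (rho d y • iteratedFDeriv ℝ ℓ h (x - ε • y)) (fun i => EuclideanSpace.single (m i) 1)|
      ≤ ∫ y, rho d y := by
        rw [← Real.norm_eq_abs]
        exact norm_integral_le_of_norm_le rho_integrable
          (Filter.Eventually.of_forall hptwise)
    _ = 1 := rho_integral
end Main

section Top
variable {d k : ℕ} {h : Ed d → ℝ} {ε : ℝ}

lemma norm_scaled {ε : ℝ} (hε : 0 < ε) {w : Ed d} (hw : 2 * ε < ‖w‖) :
    2 < ‖ε⁻¹ • w‖ := by
  rw [norm_smul, Real.norm_eq_abs, abs_of_pos (inv_pos.2 hε)]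
  rw [show (2:ℝ) = ε⁻¹ * (2 * ε) by field_simp]
  exact mul_lt_mul_of_pos_left hw (inv_pos.2 hε)

lemma moll_topbound (hk : ContDiff ℝ (k : ℕ) h)
    (hb : ∀ ℓ : ℕ, ℓ ≤ k → ∀ x, ∀ m : Fin ℓ → Fin d,
      |iteratedFDeriv ℝ ℓ h x (fun i => EuclideanSpace.single (m i) 1)| ≤ 1)
    (hε : 0 < ε) (x : Ed d) (m : Fin (k + 1) → Fin d) :
    |iteratedFDeriv ℝ (k + 1) (fun x => ∫ y, rho d y • h (x - ε • y)) x
      (fun i => EuclideanSpace.single (m i) 1)| ≤ Cd d / ε := by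
  have hB : ∀ ℓ : ℕ, ℓ ≤ k → ∀ x, ‖iteratedFDeriv ℝ ℓ h x‖ ≤ (d : ℝ) ^ ℓ :=
    fun ℓ hℓ x => ml_bound _ (hb ℓ hℓ x)
  set F := iteratedFDeriv ℝ k h with hF
  have hFcont : Continuous F := by
    refine (hk.iteratedFDeriv_right (m := 0) (i := k) ?_).continuous
    simp
  have hFnorm : ∀ z, ‖F z‖ ≤ (d : ℝ) ^ k := hB k le_rfl
  obtain ⟨Mρ, hMρ0, hMρ⟩ := fderiv_rho_bound (d := d)
  set S : Ed d →L[ℝ] Ed d := (ε⁻¹ : ℝ) • ContinuousLinearMap.id ℝ (Ed d) with hS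
  have hSnorm : ‖S‖ ≤ ε⁻¹ := by
    refine le_trans (ContinuousLinearMap.opNorm_smul_le _ _) ?_
    rw [Real.norm_eq_abs, abs_of_pos (inv_pos.2 hε)]
    calc ε⁻¹ * ‖ContinuousLinearMap.id ℝ (Ed d)‖ ≤ ε⁻¹ * 1 :=
          mul_le_mul_of_nonneg_left ContinuousLinearMap.norm_id_le (inv_pos.2 hε).le
      _ = ε⁻¹ := mul_one _
  set Φ : Ed d → Ed d → (Ed d →L[ℝ] ContinuousMultilinearMap ℝ (fun _ : Fin k => Ed d) ℝ) :=
    fun x' u => (((ε ^ d)⁻¹ : ℝ) • ((fderiv ℝ (rho d) (ε⁻¹ • (x' - u))).comp S)).smulRight (F u)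
    with hΦ
  have hΦzero : ∀ x' u : Ed d, 2 * ε < ‖x' - u‖ → Φ x' u = 0 := by
    intro x' u hu
    have h0 : fderiv ℝ (rho d) (ε⁻¹ • (x' - u)) = 0 := fderiv_rho_eq_zero (norm_scaled hε hu)
    rw [hΦ]
    simp only [h0, ContinuousLinearMap.zero_comp, smul_zero]
    ext v
    simp
  have haff : ∀ x' : Ed d, Continuous fun u : Ed d => ε⁻¹ • (x' - u) :=
    fun x' => (continuous_const.sub continuous_id).const_smul ε⁻¹
  have hΦcont : ∀ x' : Ed d, Continuous (Φ x') := by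
    intro x'
    have hA : Continuous fun u : Ed d =>
        ((ε ^ d)⁻¹ : ℝ) • ((fderiv ℝ (rho d) (ε⁻¹ • (x' - u))).comp S) :=
      by have := fderiv_rho_continuous (d := d); fun_prop
    exact isBoundedBilinearMap_smulRight.continuous.comp (hA.prodMk hFcont)
  have hΦcs : ∀ x' : Ed d, HasCompactSupport (Φ x') := by
    intro x'
    apply HasCompactSupport.intro (isCompact_closedBall x' (2 * ε))
    intro u hu
    apply hΦzero
    rw [Metric.mem_closedBall, not_le, dist_comm] at hu
    rwa [← dist_eq_norm]
  have hΦint := fun x' : Ed d => Continuous.integrable_of_hasCompactSupport (μ := volume)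
    (f := Φ x') (by exact hΦcont x') (by exact hΦcs x')
  have hΦnorm : ∀ x' u : Ed d, ‖Φ x' u‖ ≤ (ε ^ d)⁻¹ * (ε⁻¹ * Mρ * (d : ℝ) ^ k) := by
    intro x' u
    rw [hΦ]
    simp only
    rw [ContinuousLinearMap.norm_smulRight_apply]
    have h1 : ‖((ε ^ d)⁻¹ : ℝ) • ((fderiv ℝ (rho d) (ε⁻¹ • (x' - u))).comp S)‖
        ≤ (ε ^ d)⁻¹ * (Mρ * ε⁻¹) := by
      refine le_trans (ContinuousLinearMap.opNorm_smul_le _ _) ?_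
      rw [Real.norm_eq_abs, abs_of_pos (by positivity)]
      refine mul_le_mul_of_nonneg_left ?_ (by positivity)
      refine le_trans (ContinuousLinearMap.opNorm_comp_le _ _) ?_
      exact mul_le_mul (hMρ _) hSnorm (norm_nonneg _) hMρ0
    calc ‖((ε ^ d)⁻¹ : ℝ) • ((fderiv ℝ (rho d) (ε⁻¹ • (x' - u))).comp S)‖ * ‖F u‖
        ≤ ((ε ^ d)⁻¹ * (Mρ * ε⁻¹)) * ((d : ℝ) ^ k) :=
          mul_le_mul h1 (hFnorm u) (norm_nonneg _) (by positivity)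
      _ = (ε ^ d)⁻¹ * (ε⁻¹ * Mρ * (d : ℝ) ^ k) := by ring
  have hkey : HasFDerivAt (fun x' => ∫ u, ((ε ^ d)⁻¹ * rho d (ε⁻¹ • (x' - u))) • F u)
      (∫ u, Φ x u) x := by
    apply hasFDerivAt_integral_of_dominated_of_fderiv_le (F' := Φ)
      (bound := Set.indicator (Metric.closedBall x (1 + 2 * ε))
        (fun _ => (ε ^ d)⁻¹ * (ε⁻¹ * Mρ * (d : ℝ) ^ k))) (s := Metric.ball x 1) (Metric.ball_mem_nhds x one_pos)
    · refine Filter.Eventually.of_forall fun x' => ?_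
      exact ((continuous_const.mul (rho_continuous.comp (haff x'))).smul hFcont).aestronglyMeasurable
    · apply Continuous.integrable_of_hasCompactSupport
      · exact (continuous_const.mul (rho_continuous.comp (haff x))).smul hFcont
      · apply HasCompactSupport.intro (isCompact_closedBall x (2 * ε))
        intro u hu
        rw [Metric.mem_closedBall, not_le, dist_comm] at hu
        have : rho d (ε⁻¹ • (x - u)) = 0 :=
          rho_eq_zero (norm_scaled hε (by rwa [← dist_eq_norm]))
        simp [this]
    · exact (hΦint x).aestronglyMeasurable

    · refine Filter.Eventually.of_forall fun u => fun x' hx' => ?_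
      by_cases hu : u ∈ Metric.closedBall x (1 + 2 * ε)
      · rw [Set.indicator_of_mem hu]
        exact hΦnorm x' u
      · rw [Set.indicator_of_notMem hu]
        have hdist : 2 * ε < ‖x' - u‖ := by
          rw [Metric.mem_closedBall, not_le, dist_comm] at hu
          rw [Metric.mem_ball] at hx'
          have h1 : dist x u ≤ dist x x' + dist x' u := dist_triangle _ _ _
          have : 2 * ε < dist x' u := by
            have := dist_comm x x' ▸ hx'
            linarith
          rwa [dist_eq_norm] at this
        rw [hΦzero x' u hdist]
        simp
    · rw [integrable_indicator_iff measurableSet_closedBall]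
      apply (integrableOn_const_iff enorm_ne_top).2
      exact Or.inr measure_closedBall_lt_top
    · refine Filter.Eventually.of_forall fun u => fun x' _ => ?_
      have hι : HasFDerivAt (fun x' : Ed d => ε⁻¹ • (x' - u)) S x' :=
        ((hasFDerivAt_id x').sub_const u).const_smul ε⁻¹
      have hρd : HasFDerivAt (rho d) (fderiv ℝ (rho d) (ε⁻¹ • (x' - u))) (ε⁻¹ • (x' - u)) :=
        (((rho_contDiff (n := 1)).differentiable one_ne_zero) _).hasFDerivAt
      have h2 := hρd.comp x' hι
      have h3 := h2.const_mul ((ε ^ d)⁻¹ : ℝ)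
      have h4 := h3.smul_const (F u)
      exact h4
  have e : iteratedFDeriv ℝ k (fun x => ∫ y, rho d y • h (x - ε • y))
      = fun x' => ∫ u, ((ε ^ d)⁻¹ * rho d (ε⁻¹ • (x' - u))) • F u :=
    (moll_rep hk hB ε k le_rfl).trans (funext fun x' => cov hε F x')
  rw [iteratedFDeriv_succ_apply_left, e, hkey.fderiv]
  set e0 := EuclideanSpace.single (m 0) (1:ℝ) with he0
  rw [ContinuousLinearMap.integral_apply (hΦint x)]
  have hint2 : Integrable (fun u => (Φ x u) e0) := by
    refine Integrable.mono' (g := fun u => ‖Φ x u‖ * ‖e0‖) ((hΦint x).norm.mul_const _)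
      (((hΦcont x).clm_apply continuous_const).aestronglyMeasurable) ?_
    exact Filter.Eventually.of_forall fun u => ContinuousLinearMap.le_opNorm _ _
  rw [ContinuousMultilinearMap.integral_apply hint2]
  have hptwise : ∀ u : Ed d,
      ‖((Φ x u) e0) (Fin.tail fun i => EuclideanSpace.single (m i) (1:ℝ))‖
        ≤ (ε ^ d)⁻¹ * ε⁻¹ * ‖fderiv ℝ (rho d) (ε⁻¹ • (x - u))‖ := by
    intro u
    have happ : (Φ x u) e0
        = ((ε ^ d)⁻¹ * (fderiv ℝ (rho d) (ε⁻¹ • (x - u)) (ε⁻¹ • e0))) • F u := by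
      rw [hΦ]
      simp [ContinuousLinearMap.smulRight_apply, smul_eq_mul, hS]
    rw [happ]
    rw [ContinuousMultilinearMap.smul_apply, norm_smul]
    have htail : (Fin.tail fun i => EuclideanSpace.single (m i) (1:ℝ))
        = fun i : Fin k => EuclideanSpace.single (Fin.tail m i) (1:ℝ) := rfl
    have hFb : ‖F u (Fin.tail fun i => EuclideanSpace.single (m i) (1:ℝ))‖ ≤ 1 := by
      rw [htail]
      simpa [Real.norm_eq_abs] using hb k le_rfl u (Fin.tail m)
    calc ‖(ε ^ d)⁻¹ * (fderiv ℝ (rho d) (ε⁻¹ • (x - u)) (ε⁻¹ • e0))‖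
          * ‖F u (Fin.tail fun i => EuclideanSpace.single (m i) (1:ℝ))‖
        ≤ ‖(ε ^ d)⁻¹ * (fderiv ℝ (rho d) (ε⁻¹ • (x - u)) (ε⁻¹ • e0))‖ * 1 :=
          mul_le_mul_of_nonneg_left hFb (norm_nonneg _)
      _ ≤ (ε ^ d)⁻¹ * ε⁻¹ * ‖fderiv ℝ (rho d) (ε⁻¹ • (x - u))‖ := by
          rw [mul_one, norm_mul, Real.norm_eq_abs (((ε:ℝ) ^ d)⁻¹),
            abs_of_pos (by positivity : (0:ℝ) < (ε ^ d)⁻¹)]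
          have hthis : ‖fderiv ℝ (rho d) (ε⁻¹ • (x - u)) (ε⁻¹ • e0)‖
              ≤ ‖fderiv ℝ (rho d) (ε⁻¹ • (x - u))‖ * ε⁻¹ := by
            have h5 : ‖ε⁻¹ • e0‖ = ε⁻¹ := by
              rw [norm_smul, Real.norm_eq_abs, abs_of_pos (inv_pos.2 hε), he0,
                EuclideanSpace.norm_single]
              simp
            calc ‖fderiv ℝ (rho d) (ε⁻¹ • (x - u)) (ε⁻¹ • e0)‖
                ≤ ‖fderiv ℝ (rho d) (ε⁻¹ • (x - u))‖ * ‖ε⁻¹ • e0‖ :=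
                  ContinuousLinearMap.le_opNorm _ _
              _ = ‖fderiv ℝ (rho d) (ε⁻¹ • (x - u))‖ * ε⁻¹ := by rw [h5]
          calc (ε ^ d)⁻¹ * ‖fderiv ℝ (rho d) (ε⁻¹ • (x - u)) (ε⁻¹ • e0)‖
              ≤ (ε ^ d)⁻¹ * (‖fderiv ℝ (rho d) (ε⁻¹ • (x - u))‖ * ε⁻¹) :=
                mul_le_mul_of_nonneg_left hthis (by positivity)
            _ = (ε ^ d)⁻¹ * ε⁻¹ * ‖fderiv ℝ (rho d) (ε⁻¹ • (x - u))‖ := by ring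
  have hgi : Integrable (fun u => (ε ^ d)⁻¹ * ε⁻¹ * ‖fderiv ℝ (rho d) (ε⁻¹ • (x - u))‖) := by
    apply Integrable.const_mul
    apply Continuous.integrable_of_hasCompactSupport
    · exact (fderiv_rho_continuous.comp (haff x)).norm
    · apply HasCompactSupport.intro (isCompact_closedBall x (2 * ε))
      intro u hu
      rw [Metric.mem_closedBall, not_le, dist_comm] at hu
      have : fderiv ℝ (rho d) (ε⁻¹ • (x - u)) = 0 :=
        fderiv_rho_eq_zero (norm_scaled hε (by rwa [← dist_eq_norm]))
      simp [this]
  have hcv : ∫ u, ‖fderiv ℝ (rho d) (ε⁻¹ • (x - u))‖ = ε ^ d * Cd d := by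
    have e1 : ∫ u, ‖fderiv ℝ (rho d) (ε⁻¹ • (x - u))‖
        = ∫ w, ‖fderiv ℝ (rho d) (ε⁻¹ • w)‖ :=
      integral_sub_left_eq_self (fun w => ‖fderiv ℝ (rho d) (ε⁻¹ • w)‖) volume x
    have e2 : ∫ w, ‖fderiv ℝ (rho d) (ε⁻¹ • w)‖
        = |((ε⁻¹ ^ (Module.finrank ℝ (Ed d)))⁻¹ : ℝ)| • ∫ w, ‖fderiv ℝ (rho d) w‖ :=
      MeasureTheory.Measure.integral_comp_smul volume (fun w => ‖fderiv ℝ (rho d) w‖) ε⁻¹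
    rw [finrank_euclideanSpace_fin] at e2
    rw [e1, e2, Cd]
    rw [abs_of_pos (by positivity), smul_eq_mul]
    congr 1
    field_simp
    rw [one_div, inv_pow, inv_mul_cancel₀ (by positivity)]
  calc |∫ u, ((Φ x u) e0) (Fin.tail fun i => EuclideanSpace.single (m i) (1:ℝ))|
      ≤ ∫ u, (ε ^ d)⁻¹ * ε⁻¹ * ‖fderiv ℝ (rho d) (ε⁻¹ • (x - u))‖ := by
        rw [← Real.norm_eq_abs]
        exact norm_integral_le_of_norm_le hgi (Filter.Eventually.of_forall hptwise)
    _ = (ε ^ d)⁻¹ * ε⁻¹ * (ε ^ d * Cd d) := by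
        rw [integral_const_mul, hcv]
    _ = Cd d / ε := by
        field_simp
end Top

section Close
variable {d k : ℕ} {h : Ed d → ℝ} {ε : ℝ}

lemma fderiv_h_bound (hk : ContDiff ℝ (k : ℕ) h) (hk1 : 1 ≤ k)
    (hb : ∀ ℓ : ℕ, ℓ ≤ k → ∀ x, ∀ m : Fin ℓ → Fin d,
      |iteratedFDeriv ℝ ℓ h x (fun i => EuclideanSpace.single (m i) 1)| ≤ 1)
    (z : Ed d) : ‖fderiv ℝ h z‖ ≤ (d : ℝ) := by
  have hB := ml_bound _ (hb 1 hk1 z)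
  refine ContinuousLinearMap.opNorm_le_bound _ (Nat.cast_nonneg d) fun v => ?_
  have e : fderiv ℝ h z v = iteratedFDeriv ℝ 1 h z (fun _ => v) :=
    (iteratedFDeriv_one_apply (m := fun _ => v)).symm
  rw [e]
  calc ‖iteratedFDeriv ℝ 1 h z (fun _ => v)‖
      ≤ ‖iteratedFDeriv ℝ 1 h z‖ * ∏ _i : Fin 1, ‖v‖ :=
        ContinuousMultilinearMap.le_opNorm _ _
    _ ≤ (d : ℝ) * ‖v‖ := by
        rw [Finset.prod_const, Finset.card_univ]
        simp only [Fintype.card_fin, pow_one]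
        exact mul_le_mul_of_nonneg_right (by simpa using hB) (norm_nonneg v)

lemma h_lip (hk : ContDiff ℝ (k : ℕ) h) (hk1 : 1 ≤ k)
    (hb : ∀ ℓ : ℕ, ℓ ≤ k → ∀ x, ∀ m : Fin ℓ → Fin d,
      |iteratedFDeriv ℝ ℓ h x (fun i => EuclideanSpace.single (m i) 1)| ≤ 1)
    (a b : Ed d) : |h a - h b| ≤ (d : ℝ) * ‖a - b‖ := by
  have hdiff : ∀ x ∈ (Set.univ : Set (Ed d)), DifferentiableAt ℝ h x := fun x _ =>
    (hk.differentiable (by exact_mod_cast (show k ≠ 0 by omega))) x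
  have hbd : ∀ x ∈ (Set.univ : Set (Ed d)), ‖fderiv ℝ h x‖ ≤ (d : ℝ) := fun x _ =>
    fderiv_h_bound hk hk1 hb x
  have := convex_univ.norm_image_sub_le_of_norm_fderiv_le hdiff hbd (Set.mem_univ b) (Set.mem_univ a)
  simpa [Real.norm_eq_abs] using this

lemma moll_close (hk : ContDiff ℝ (k : ℕ) h) (hk1 : 1 ≤ k)
    (hb : ∀ ℓ : ℕ, ℓ ≤ k → ∀ x, ∀ m : Fin ℓ → Fin d,
      |iteratedFDeriv ℝ ℓ h x (fun i => EuclideanSpace.single (m i) 1)| ≤ 1)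
    (hε : 0 ≤ ε) (x : Ed d) :
    |(∫ y, rho d y • h (x - ε • y)) - h x| ≤ 2 * d * ε := by
  have hint1 : Integrable (fun y => rho d y • h (x - ε • y)) :=
    smul_integrable_aux hk.continuous x ε
  have hint2 : Integrable (fun y => rho d y • h x) := rho_integrable.smul_const _
  have e : (∫ y, rho d y • h (x - ε • y)) - h x
      = ∫ y, (rho d y • h (x - ε • y) - rho d y • h x) := by
    rw [integral_sub hint1 hint2]
    congr 1
    rw [integral_smul_const, rho_integral, one_smul]
  rw [e]
  have hpt : ∀ y : Ed d, ‖rho d y • h (x - ε • y) - rho d y • h x‖ ≤ rho d y * (2 * d * ε) := by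
    intro y
    rw [← smul_sub, norm_smul, Real.norm_eq_abs, abs_of_nonneg (rho_nn y)]
    by_cases hρ : rho d y = 0
    · simp [hρ]
    · have hy2 : ‖y‖ ≤ 2 := rho_supp_norm hρ
      refine mul_le_mul_of_nonneg_left ?_ (rho_nn y)
      have e2 : x - ε • y - x = -(ε • y) := by abel
      calc ‖h (x - ε • y) - h x‖ ≤ (d : ℝ) * ‖x - ε • y - x‖ := h_lip hk hk1 hb _ _
        _ = (d : ℝ) * (ε * ‖y‖) := by
            rw [e2, norm_neg, norm_smul, Real.norm_eq_abs, abs_of_nonneg hε]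
        _ ≤ (d : ℝ) * (ε * 2) := by
            refine mul_le_mul_of_nonneg_left ?_ (Nat.cast_nonneg d)
            exact mul_le_mul_of_nonneg_left hy2 hε
        _ = 2 * d * ε := by ring
  calc |∫ y, (rho d y • h (x - ε • y) - rho d y • h x)|
      ≤ ∫ y, rho d y * (2 * d * ε) := by
        rw [← Real.norm_eq_abs]
        exact norm_integral_le_of_norm_le (rho_integrable.mul_const _)
          (Filter.Eventually.of_forall hpt)
    _ = 2 * d * ε := by rw [integral_mul_const, rho_integral, one_mul]

lemma moll_contDiff (hcont : Continuous h) (hε : 0 < ε) {n : ℕ∞} :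
    ContDiff ℝ n (fun x => ∫ y, rho d y • h (x - ε • y)) := by
  set ψ : Ed d → ℝ := fun z => (ε ^ d)⁻¹ * rho d (ε⁻¹ • z) with hψ
  have hψsm : ContDiff ℝ n ψ := by
    refine contDiff_const.mul ?_
    exact rho_contDiff.comp (contDiff_const_smul ε⁻¹)
  have hψcs : HasCompactSupport ψ := by
    apply HasCompactSupport.intro (isCompact_closedBall (0 : Ed d) (2 * ε))
    intro u hu
    rw [Metric.mem_closedBall, not_le, dist_zero_right] at hu
    rw [hψ]
    simp [rho_eq_zero (norm_scaled hε hu)]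
  have hloc : LocallyIntegrable h volume := hcont.locallyIntegrable
  have hc := HasCompactSupport.contDiff_convolution_right
    (L := ContinuousLinearMap.lsmul ℝ ℝ) hψcs hloc hψsm
  have heq : (fun x => ∫ y, rho d y • h (x - ε • y))
      = MeasureTheory.convolution h ψ (ContinuousLinearMap.lsmul ℝ ℝ) volume := by
    funext x
    rw [cov hε h x, MeasureTheory.convolution_def]
    congr 1
    funext u
    simp only [hψ, ContinuousLinearMap.lsmul_apply, smul_eq_mul]
    ring
  rw [heq]
  exact hc
end Close

section Assemble
variable {d : ℕ}

lemma step_lemma {k : ℕ} (hk1 : 1 ≤ k) (μZ μY : Measure (Ed d))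
    [IsProbabilityMeasure μZ] [IsProbabilityMeasure μY] {ε : ℝ} (hε : 0 < ε) :
    dtW d k μZ μY ≤ 4 * d * ε + max 1 (Cd d / ε) * dtW d (k + 1) μZ μY := by
  set A : ℝ := max 1 (Cd d / ε) with hA
  have hA1 : (1:ℝ) ≤ A := le_max_left _ _
  have hA0 : (0:ℝ) < A := lt_of_lt_of_le one_pos hA1
  have hACd : Cd d / ε ≤ A := le_max_right _ _
  refine dtW_le (add_nonneg (by positivity) (mul_nonneg hA0.le dtW_nonneg)) ?_
  intro h hh
  set g : Ed d → ℝ := fun x => ∫ y, rho d y • h (x - ε • y) with hg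
  have hgsm : ∀ n : ℕ∞, ContDiff ℝ (n : ℕ∞) g := fun n => moll_contDiff hh.1.continuous hε
  have hgb : ∀ x, |g x| ≤ 1 := by
    intro x
    have := moll_dirbound hh.1 hh.2 ε (Nat.zero_le k) x (Fin.elim0)
    simpa [iteratedFDeriv_zero_apply, hg] using this
  have hgcont : Continuous g := (hgsm 1).continuous
  have hgint : ∀ (μ : Measure (Ed d)) [IsProbabilityMeasure μ], Integrable g μ := by
    intro μ _
    refine Integrable.mono' (integrable_const 1) hgcont.aestronglyMeasurable ?_
    exact Filter.Eventually.of_forall fun x => by simpa using hgb x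
  have htc : TC d (k + 1) (fun x => A⁻¹ • g x) := by
    constructor
    · exact_mod_cast (hgsm ((k + 1 : ℕ) : ℕ∞)).const_smul A⁻¹
    · intro ℓ hℓ x m
      have hsm : ContDiff ℝ (ℓ : ℕ) g := by exact_mod_cast hgsm ((ℓ : ℕ) : ℕ∞)
      rw [iteratedFDeriv_const_smul_apply' hsm.contDiffAt]
      rw [ContinuousMultilinearMap.smul_apply, smul_eq_mul, abs_mul,
        abs_of_pos (inv_pos.2 hA0)]
      by_cases hℓk : ℓ ≤ k
      · have hd := moll_dirbound hh.1 hh.2 ε hℓk x m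
        calc A⁻¹ * |iteratedFDeriv ℝ ℓ g x fun i => EuclideanSpace.single (m i) 1|
            ≤ A⁻¹ * 1 := mul_le_mul_of_nonneg_left hd (inv_pos.2 hA0).le
          _ ≤ 1 := by rw [mul_one]; exact inv_le_one_of_one_le₀ hA1
      · have hℓeq : ℓ = k + 1 := by omega
        subst hℓeq
        have hd := moll_topbound hh.1 hh.2 hε x m
        calc A⁻¹ * |iteratedFDeriv ℝ (k+1) g x fun i => EuclideanSpace.single (m i) 1|
            ≤ A⁻¹ * (Cd d / ε) := mul_le_mul_of_nonneg_left hd (inv_pos.2 hA0).le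
          _ ≤ A⁻¹ * A := mul_le_mul_of_nonneg_left hACd (inv_pos.2 hA0).le
          _ = 1 := inv_mul_cancel₀ hA0.ne'
  have hkey : |∫ x, A⁻¹ • g x ∂μZ - ∫ y, A⁻¹ • g y ∂μY| ≤ dtW d (k+1) μZ μY := le_dtW htc
  have hsc : ∀ (μ : Measure (Ed d)), ∫ x, A⁻¹ • g x ∂μ = A⁻¹ • ∫ x, g x ∂μ :=
    fun μ => integral_smul _ _
  have hgg : |∫ x, g x ∂μZ - ∫ y, g y ∂μY| ≤ A * dtW d (k+1) μZ μY := by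
    have he : |∫ x, g x ∂μZ - ∫ y, g y ∂μY|
        = A * |∫ x, A⁻¹ • g x ∂μZ - ∫ y, A⁻¹ • g y ∂μY| := by
      rw [hsc, hsc, smul_eq_mul, smul_eq_mul, ← mul_sub, abs_mul,
        abs_of_pos (inv_pos.2 hA0), ← mul_assoc, mul_inv_cancel₀ hA0.ne', one_mul]
    rw [he]
    exact mul_le_mul_of_nonneg_left hkey hA0.le
  have hclose : ∀ (μ : Measure (Ed d)) [IsProbabilityMeasure μ],
      |∫ x, h x ∂μ - ∫ x, g x ∂μ| ≤ 2 * d * ε := by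
    intro μ _
    rw [← integral_sub (hh.integrable μ) (hgint μ)]
    have hbig : ‖∫ x, (h x - g x) ∂μ‖ ≤ ∫ _x, (2 * (d:ℝ) * ε) ∂μ :=
      norm_integral_le_of_norm_le (integrable_const _)
        (Filter.Eventually.of_forall fun x => by
          rw [Real.norm_eq_abs, abs_sub_comm]
          exact moll_close hh.1 hk1 hh.2 hε.le x)
    rwa [integral_const, probReal_univ, one_smul, Real.norm_eq_abs] at hbig
  have hcY : |∫ x, g x ∂μY - ∫ y, h y ∂μY| ≤ 2 * d * ε := by
    rw [abs_sub_comm]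
    exact hclose μY
  calc |∫ x, h x ∂μZ - ∫ y, h y ∂μY|
      ≤ |∫ x, h x ∂μZ - ∫ x, g x ∂μZ| + |∫ x, g x ∂μZ - ∫ y, h y ∂μY| := abs_sub_le _ _ _
    _ ≤ |∫ x, h x ∂μZ - ∫ x, g x ∂μZ|
        + (|∫ x, g x ∂μZ - ∫ y, g y ∂μY| + |∫ x, g x ∂μY - ∫ y, h y ∂μY|) := by
        exact add_le_add le_rfl (abs_sub_le _ _ _)
    _ ≤ 2 * d * ε + (A * dtW d (k+1) μZ μY + 2 * d * ε) :=
        add_le_add (hclose μZ) (add_le_add hgg hcY)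
    _ = 4 * d * ε + A * dtW d (k+1) μZ μY := by ring

lemma interp {k : ℕ} (hk1 : 1 ≤ k) (μZ μY : Measure (Ed d))
    [IsProbabilityMeasure μZ] [IsProbabilityMeasure μY]
    (hlt : dtW d (k + 1) μZ μY < 1) :
    dtW d k μZ μY ≤ (4 * d + Cd d + 2) * Real.sqrt (dtW d (k + 1) μZ μY) := by
  have ht0 : 0 ≤ dtW d (k + 1) μZ μY := dtW_nonneg
  rcases ht0.eq_or_lt with h0 | hpos
  · rw [← h0, Real.sqrt_zero, mul_zero]
    have hle : ∀ δ : ℝ, 0 < δ → dtW d k μZ μY ≤ 4 * d * δ := by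
      intro δ hδ
      have hs := step_lemma hk1 μZ μY hδ
      rwa [← h0, mul_zero, add_zero] at hs
    by_contra hcon
    push_neg at hcon
    have h1 := hle (dtW d k μZ μY / (4 * d + 1)) (div_pos hcon (by positivity))
    have h2 : (0:ℝ) ≤ 4 * d := by positivity
    have h3 : dtW d k μZ μY / (4 * (d:ℝ) + 1) * (4 * (d:ℝ) + 1) = dtW d k μZ μY :=
      div_mul_cancel₀ _ (by positivity)
    nlinarith [h1, h3, hcon, h2]
  · set ε := Real.sqrt (dtW d (k + 1) μZ μY) with hε'
    set t := dtW d (k + 1) μZ μY with ht'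
    have hε : 0 < ε := Real.sqrt_pos.2 hpos
    have hstep := step_lemma hk1 μZ μY hε
    have hmax : max 1 (Cd d / ε) ≤ 1 + Cd d / ε :=
      max_le (le_add_of_nonneg_right (div_nonneg Cd_nonneg hε.le))
        (le_add_of_nonneg_left zero_le_one)
    have hsq1 : ε ≤ 1 := by
      rw [hε']
      exact (Real.sqrt_le_sqrt hlt.le).trans_eq Real.sqrt_one
    have htεε : t = ε * ε := (Real.mul_self_sqrt ht0).symm
    have htle : t ≤ ε := by nlinarith
    have hdivε : Cd d / ε * t = Cd d * ε := by
      rw [htεε]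
      field_simp
    have hCd := Cd_nonneg (d := d)
    calc dtW d k μZ μY ≤ 4 * d * ε + max 1 (Cd d / ε) * t := hstep
      _ ≤ 4 * d * ε + (1 + Cd d / ε) * t :=
          add_le_add le_rfl (mul_le_mul_of_nonneg_right hmax ht0)
      _ = 4 * d * ε + t + Cd d / ε * t := by ring
      _ = 4 * d * ε + t + Cd d * ε := by rw [hdivε]
      _ ≤ 4 * d * ε + ε + Cd d * ε := by linarith
      _ ≤ (4 * d + Cd d + 2) * ε := by nlinarith [hε.le]

end Assemble

end DtWAux

/-- For `r ≥ 2` there are constants `C̃_r, C̄_r > 0`, depending only on `r` and `d`,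
such that for any random vectors (laws) `Z`, `Y` in `ℝ^d`: if `d̃_{W_r}(Z,Y) < 1` then
`d̃_{W_{r-1}}(Z,Y) ≤ C̃_r √(d̃_{W_r}(Z,Y))`, and consequently if `d̃_{W_2}(Z,Y) < 1` then
`d̃_{W_1}(Z,Y) ≤ C̄_r (d̃_{W_r}(Z,Y))^{1/2^{r-1}}`. -/
theorem dtW_interpolation (d r : ℕ) (hr : 2 ≤ r) :
    ∃ Ct : ℝ, 0 < Ct ∧ ∃ Cb : ℝ, 0 < Cb ∧
      ∀ μZ μY : Measure (EuclideanSpace ℝ (Fin d)),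
        IsProbabilityMeasure μZ → IsProbabilityMeasure μY →
        (dtW d r μZ μY < 1 →
          dtW d (r - 1) μZ μY ≤ Ct * Real.sqrt (dtW d r μZ μY)) ∧
        (dtW d 2 μZ μY < 1 →
          dtW d 1 μZ μY ≤ Cb * (dtW d r μZ μY) ^ ((1 : ℝ) / 2 ^ (r - 1))) := by
  classical
  set Ct : ℝ := 4 * d + DtWAux.Cd d + 2 with hCt
  have hCd := DtWAux.Cd_nonneg (d := d)
  have h4d : (0:ℝ) ≤ 4 * d := by positivity
  have hCt2 : (2:ℝ) ≤ Ct := by rw [hCt]; linarith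
  have hCt0 : (0:ℝ) < Ct := by linarith
  have hCt1 : (1:ℝ) ≤ Ct := by linarith
  refine ⟨Ct, hCt0, Ct ^ 2, by positivity, ?_⟩
  intro μZ μY hZ hY
  haveI := hZ
  haveI := hY
  constructor
  · intro hlt
    have hk1 : 1 ≤ r - 1 := by omega
    have heq : r - 1 + 1 = r := by omega
    have hmain := DtWAux.interp (d := d) hk1 μZ μY (by rwa [heq])
    rwa [heq] at hmain
  · intro hlt2
    have hchain : ∀ j : ℕ, dtW d 1 μZ μY
        ≤ Ct ^ ((2 : ℝ) - 2 * (1/2 : ℝ) ^ (j + 1))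
          * (dtW d (j + 2) μZ μY) ^ ((1/2 : ℝ) ^ (j + 1)) := by
      intro j
      induction j with
      | zero =>
        have h1 := DtWAux.interp (d := d) (le_refl 1) μZ μY (show dtW d (1+1) μZ μY < 1 from hlt2)
        have e1 : ((2:ℝ) - 2 * (1/2 : ℝ) ^ (0 + 1)) = 1 := by norm_num
        have e2 : ((1/2 : ℝ) ^ (0 + 1)) = (1/2 : ℝ) := by norm_num
        rw [e1, e2, Real.rpow_one, ← Real.sqrt_eq_rpow]
        exact h1
      | succ j IH =>
        set e : ℝ := (1/2 : ℝ) ^ (j + 1) with he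
        have he0 : 0 < e := by positivity
        have htj1lt : dtW d (j + 3) μZ μY < 1 :=
          lt_of_le_of_lt (DtWAux.dtW_anti (by omega)) hlt2
        have hstep := DtWAux.interp (d := d) (show 1 ≤ j + 2 by omega) μZ μY
          (by exact_mod_cast htj1lt)
        have htj0 : 0 ≤ dtW d (j + 2) μZ μY := DtWAux.dtW_nonneg
        have htj10 : 0 ≤ dtW d (j + 3) μZ μY := DtWAux.dtW_nonneg
        have hstep' : dtW d (j + 2) μZ μY ≤ Ct * Real.sqrt (dtW d (j + 3) μZ μY) := hstep
        calc dtW d 1 μZ μY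
            ≤ Ct ^ ((2:ℝ) - 2 * e) * (dtW d (j + 2) μZ μY) ^ e := IH
          _ ≤ Ct ^ ((2:ℝ) - 2 * e) * (Ct * Real.sqrt (dtW d (j + 3) μZ μY)) ^ e := by
              refine mul_le_mul_of_nonneg_left ?_ (Real.rpow_nonneg hCt0.le _)
              exact Real.rpow_le_rpow htj0 hstep' he0.le
          _ = Ct ^ ((2:ℝ) - 2 * e)
              * (Ct ^ e * ((dtW d (j + 3) μZ μY) ^ ((1:ℝ)/2)) ^ e) := by
              rw [Real.mul_rpow hCt0.le (Real.sqrt_nonneg _), Real.sqrt_eq_rpow]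
          _ = Ct ^ ((2:ℝ) - 2 * e + e) * (dtW d (j + 3) μZ μY) ^ ((1:ℝ)/2 * e) := by
              rw [Real.rpow_add hCt0, ← Real.rpow_mul htj10]
              ring
          _ ≤ Ct ^ ((2:ℝ) - 2 * (1/2 : ℝ) ^ (j + 1 + 1))
              * (dtW d (j + 1 + 2) μZ μY) ^ ((1/2 : ℝ) ^ (j + 1 + 1)) := by
              have hee : (1:ℝ)/2 * e = (1/2 : ℝ) ^ (j + 1 + 1) := by
                rw [he, pow_succ]; ring
              have hidx : j + 1 + 2 = j + 3 := by omega
              rw [hee, hidx]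
              refine mul_le_mul_of_nonneg_right ?_ (Real.rpow_nonneg htj10 _)
              refine Real.rpow_le_rpow_of_exponent_le hCt1 ?_
              rw [← hee]
              linarith
    have hj := hchain (r - 2)
    have hre : r - 2 + 2 = r := by omega
    have hre1 : r - 2 + 1 = r - 1 := by omega
    rw [hre, hre1] at hj
    have hexp : ((1/2 : ℝ)) ^ (r - 1) = (1:ℝ) / 2 ^ (r - 1) := by
      rw [div_pow, one_pow]
    rw [hexp] at hj
    have hr0 : 0 ≤ dtW d r μZ μY := DtWAux.dtW_nonneg
    calc dtW d 1 μZ μY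
        ≤ Ct ^ ((2:ℝ) - 2 * ((1:ℝ) / 2 ^ (r - 1))) * (dtW d r μZ μY) ^ ((1:ℝ) / 2 ^ (r - 1)) := hj
      _ ≤ Ct ^ 2 * (dtW d r μZ μY) ^ ((1:ℝ) / 2 ^ (r - 1)) := by
          refine mul_le_mul_of_nonneg_right ?_ (Real.rpow_nonneg hr0 _)
          have h1 : Ct ^ ((2:ℝ) - 2 * ((1:ℝ) / 2 ^ (r - 1))) ≤ Ct ^ (2:ℝ) := by
            refine Real.rpow_le_rpow_of_exponent_le hCt1 ?_
            have : (0:ℝ) ≤ 2 * ((1:ℝ) / 2 ^ (r - 1)) := by positivity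
            linarith
          have h2 : Ct ^ (2:ℝ) = Ct ^ 2 := by
            rw [show (2:ℝ) = ((2:ℕ) : ℝ) by norm_num, Real.rpow_natCast]
          rw [← h2]
          exact h1
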